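/- Let X, Y2 be Hilbert spaces, A2 : Y2 → X bounded linear, ξ ∈ X with ξ ∉ range(A2). For α > 0 set η_α := (A2 A2* + α I)⁻¹ ξ and ξ_α := η_α / ⟨ξ, η_α⟩^{3/4}. Then ‖A2* ξ_α‖ ≤ ⟨ξ, η_α⟩^{-1/4}, and hence A2* ξ_α → 0 as α → 0+. -/

import Mathlib

open ContinuousLinearMap Filter
open scoped InnerProductSpace Topology

/-- With `η_α = (A₂A₂* + αI)⁻¹ ξ` and `ξ_α = η_α / ⟨ξ, η_α⟩^(3/4)`, one has
`‖A₂* ξ_α‖ ≤ ⟨ξ, η_α⟩^(-1/4)`, and hence `A₂* ξ_α → 0` as `α → 0⁺` when `ξ ∉ range A₂`. -/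
theorem tikhonov_normalized_adjoint_small
    {X Y2 : Type*}
    [NormedAddCommGroup X] [InnerProductSpace ℝ X] [CompleteSpace X]
    [NormedAddCommGroup Y2] [InnerProductSpace ℝ Y2] [CompleteSpace Y2]
    (A2 : Y2 →L[ℝ] X) (ξ : X) (hξ : ξ ∉ Set.range A2) (η : ℝ → X)
    (hη : ∀ α : ℝ, 0 < α →
      (A2 ∘L adjoint A2 + α • (1 : X →L[ℝ] X)) (η α) = ξ)
    (ξa : ℝ → X)
    (hξa : ∀ α : ℝ, 0 < α → ξa α = (⟪ξ, η α⟫_ℝ ^ ((3 : ℝ) / 4))⁻¹ • η α) :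
    (∀ α : ℝ, 0 < α → ‖adjoint A2 (ξa α)‖ ≤ ⟪ξ, η α⟫_ℝ ^ (-(1 : ℝ) / 4)) ∧
      Tendsto (fun α => adjoint A2 (ξa α)) (𝓝[>] (0 : ℝ)) (𝓝 0) := by
  set B := adjoint A2 with hB
  set f : ℝ → ℝ := fun α => ⟪ξ, η α⟫_ℝ with hf
  -- basic rewriting of the defining equation
  have hT : ∀ α : ℝ, 0 < α → A2 (B (η α)) + α • η α = ξ := by
    intro α hα
    have h := hη α hα
    simpa [ContinuousLinearMap.add_apply, ContinuousLinearMap.smul_apply,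
      ContinuousLinearMap.one_apply, ContinuousLinearMap.comp_apply] using h
  -- key inner product expansion
  have hE : ∀ γ : ℝ, 0 < γ → ∀ v : X,
      ⟪ξ, v⟫_ℝ = ⟪B (η γ), B v⟫_ℝ + γ * ⟪η γ, v⟫_ℝ := by
    intro γ hγ v
    conv_lhs => rw [← hT γ hγ]
    rw [inner_add_left, real_inner_smul_left, hB,
      ← ContinuousLinearMap.adjoint_inner_right]
  have hE1 : ∀ γ : ℝ, 0 < γ → f γ = ‖B (η γ)‖ ^ 2 + γ * ‖η γ‖ ^ 2 := by
    intro γ hγ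
    have h := hE γ hγ (η γ)
    rwa [real_inner_self_eq_norm_sq, real_inner_self_eq_norm_sq] at h
  -- positivity of f
  have hηne : ∀ α : ℝ, 0 < α → η α ≠ 0 := by
    intro α hα h0
    apply hξ
    refine ⟨0, ?_⟩
    have h := hT α hα
    rw [h0] at h
    simp at h
    simp [← h]
  have hfpos : ∀ α : ℝ, 0 < α → 0 < f α := by
    intro α hα
    rw [hE1 α hα]
    have h1 : 0 < α * ‖η α‖ ^ 2 := by
      have : 0 < ‖η α‖ := norm_pos_iff.mpr (hηne α hα)
      positivity
    nlinarith [sq_nonneg ‖B (η α)‖]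
  -- the key identity
  have hI : ∀ α β : ℝ, 0 < α → 0 < β →
      f α - f β = (β - α) * ‖η β‖ ^ 2 + ‖B (η α) - B (η β)‖ ^ 2
        + α * ‖η α - η β‖ ^ 2 := by
    intro α β hα hβ
    have e1 := hE α hα (η α)
    have e2 := hE α hα (η β)
    have e3 := hE β hβ (η β)
    rw [real_inner_self_eq_norm_sq, real_inner_self_eq_norm_sq] at e1
    rw [real_inner_self_eq_norm_sq, real_inner_self_eq_norm_sq] at e3
    simp only [hf]
    rw [norm_sub_sq_real, norm_sub_sq_real]
    linear_combination e1 - 2 * e2 + e3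
  -- monotonicity
  have hmono : ∀ α β : ℝ, 0 < α → 0 < β → α ≤ β → f β ≤ f α := by
    intro α β hα hβ hαβ
    have h := hI α β hα hβ
    nlinarith [sq_nonneg ‖B (η α) - B (η β)‖, sq_nonneg ‖η α - η β‖,
      sq_nonneg ‖η β‖, mul_nonneg (sub_nonneg.mpr hαβ) (sq_nonneg ‖η β‖),
      mul_nonneg hα.le (sq_nonneg ‖η α - η β‖)]
  -- Cauchy-type estimate
  have hcau : ∀ α β : ℝ, 0 < α → 0 < β → α ≤ β →
      ‖B (η α) - B (η β)‖ ^ 2 ≤ f α - f β := by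
    intro α β hα hβ hαβ
    have h := hI α β hα hβ
    nlinarith [mul_nonneg (sub_nonneg.mpr hαβ) (sq_nonneg ‖η β‖),
      mul_nonneg hα.le (sq_nonneg ‖η α - η β‖)]
  -- unboundedness of f near 0
  have hub : ∀ M : ℝ, ∃ α : ℝ, 0 < α ∧ M < f α := by
    by_contra h
    push_neg at h
    obtain ⟨M, hM⟩ := h
    set a : ℕ → ℝ := fun n => 1 / (n + 1) with ha
    have hapos : ∀ n : ℕ, 0 < a n := by
      intro n; positivity
    have hamono : ∀ n m : ℕ, n ≤ m → a m ≤ a n := by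
      intro n m hnm
      apply one_div_le_one_div_of_le (by positivity)
      exact_mod_cast add_le_add_left (Nat.cast_le.mpr hnm) 1
    set g : ℕ → ℝ := fun n => f (a n) with hg
    have hgmono : Monotone g := by
      intro n m hnm
      exact hmono (a m) (a n) (hapos m) (hapos n) (hamono n m hnm)
    have hgbdd : BddAbove (Set.range g) := by
      refine ⟨M, ?_⟩
      rintro _ ⟨n, rfl⟩
      exact hM (a n) (hapos n)
    set L : ℝ := ⨆ n, g n with hL
    have hgle : ∀ n, g n ≤ L := fun n => le_ciSup hgbdd n
    have hgL : Tendsto g atTop (𝓝 L) := tendsto_atTop_ciSup hgmono hgbdd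
    set x : ℕ → Y2 := fun n => B (η (a n)) with hx
    have key2 : ∀ n m : ℕ, n ≤ m → ‖x m - x n‖ ^ 2 ≤ g m - g n := by
      intro n m hnm
      exact hcau (a m) (a n) (hapos m) (hapos n) (hamono n m hnm)
    have hxcau : CauchySeq x := by
      apply cauchySeq_of_le_tendsto_0 (fun N => Real.sqrt (L - g N))
      · intro n m N hn hm
        have key3 : ∀ p q : ℕ, N ≤ p → N ≤ q → p ≤ q →
            dist (x p) (x q) ≤ Real.sqrt (L - g N) := by
          intro p q hp hq hpq
          rw [dist_eq_norm, norm_sub_rev]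
          have h1 := key2 p q hpq
          have h2 : g q - g p ≤ L - g N :=
            sub_le_sub (hgle q) (hgmono hp)
          have h3 : ‖x q - x p‖ = Real.sqrt (‖x q - x p‖ ^ 2) :=
            (Real.sqrt_sq (norm_nonneg _)).symm
          rw [h3]
          exact Real.sqrt_le_sqrt (le_trans h1 h2)
        rcases le_total n m with hnm | hmn
        · exact key3 n m hn hm hnm
        · rw [dist_comm]; exact key3 m n hm hn hmn
      · have h1 : Tendsto (fun N => L - g N) atTop (𝓝 (L - L)) :=
          tendsto_const_nhds.sub hgL
        have h2 : Tendsto (fun N => Real.sqrt (L - g N)) atTop (𝓝 (Real.sqrt (L - L))) :=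
          (Real.continuous_sqrt.tendsto _).comp h1
        simpa using h2
    obtain ⟨w, hw⟩ := cauchySeq_tendsto_of_complete hxcau
    have hAx : ∀ n : ℕ, A2 (x n) = ξ - a n • η (a n) := by
      intro n
      have h := hT (a n) (hapos n)
      rw [eq_sub_iff_add_eq]
      exact h
    have hz : Tendsto (fun n => a n • η (a n)) atTop (𝓝 0) := by
      rw [tendsto_zero_iff_norm_tendsto_zero]
      apply squeeze_zero (fun n => norm_nonneg _)
      · intro n
        show ‖a n • η (a n)‖ ≤ Real.sqrt (a n * M)
        have h1 : ‖a n • η (a n)‖ ^ 2 ≤ a n * M := by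
          rw [norm_smul, Real.norm_eq_abs, abs_of_pos (hapos n), mul_pow]
          have e1 := hE1 (a n) (hapos n)
          have h2 : a n * ‖η (a n)‖ ^ 2 ≤ f (a n) := by
            nlinarith [sq_nonneg ‖B (η (a n))‖]
          have h3 : f (a n) ≤ M := hM (a n) (hapos n)
          calc a n ^ 2 * ‖η (a n)‖ ^ 2 = a n * (a n * ‖η (a n)‖ ^ 2) := by ring
            _ ≤ a n * M := by
              apply mul_le_mul_of_nonneg_left (le_trans h2 h3) (hapos n).le
        calc ‖a n • η (a n)‖ = Real.sqrt (‖a n • η (a n)‖ ^ 2) :=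
              (Real.sqrt_sq (norm_nonneg _)).symm
          _ ≤ Real.sqrt (a n * M) := Real.sqrt_le_sqrt h1
      · have h1 : Tendsto (fun n : ℕ => a n * M) atTop (𝓝 (0 * M)) :=
          tendsto_one_div_add_atTop_nhds_zero_nat.mul_const M
        have h2 : Tendsto (fun n : ℕ => Real.sqrt (a n * M)) atTop
            (𝓝 (Real.sqrt (0 * M))) := (Real.continuous_sqrt.tendsto _).comp h1
        simpa using h2
    have hlim1 : Tendsto (fun n => A2 (x n)) atTop (𝓝 (A2 w)) :=
      (A2.continuous.tendsto w).comp hw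
    have hlim2 : Tendsto (fun n => A2 (x n)) atTop (𝓝 ξ) := by
      simp only [hAx]
      simpa using tendsto_const_nhds.sub hz
    exact hξ ⟨w, tendsto_nhds_unique hlim1 hlim2⟩
  -- f tends to infinity
  have htop : Tendsto f (𝓝[>] (0 : ℝ)) atTop := by
    rw [tendsto_atTop]
    intro M
    obtain ⟨α0, hα0, hMα0⟩ := hub M
    have hmem : Set.Ioo (0 : ℝ) α0 ∈ 𝓝[>] (0 : ℝ) :=
      Ioo_mem_nhdsGT_of_mem (by simp [hα0])
    filter_upwards [hmem] with α hα
    exact le_trans hMα0.le (hmono α α0 hα.1 hα0 hα.2.le)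
  -- the bound
  have hbound : ∀ α : ℝ, 0 < α → ‖B (ξa α)‖ ≤ f α ^ (-(1 : ℝ) / 4) := by
    intro α hα
    have hfα := hfpos α hα
    rw [hξa α hα, map_smul, norm_smul, Real.norm_eq_abs,
      abs_of_pos (inv_pos.mpr (Real.rpow_pos_of_pos hfα _))]
    have hBle : ‖B (η α)‖ ≤ f α ^ ((1 : ℝ) / 2) := by
      have e1 := hE1 α hα
      have h1 : ‖B (η α)‖ ^ 2 ≤ f α := by
        have h4 : 0 ≤ α * ‖η α‖ ^ 2 := mul_nonneg hα.le (sq_nonneg _)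
        linarith
      calc ‖B (η α)‖ = Real.sqrt (‖B (η α)‖ ^ 2) := (Real.sqrt_sq (norm_nonneg _)).symm
        _ ≤ Real.sqrt (f α) := Real.sqrt_le_sqrt h1
        _ = f α ^ ((1 : ℝ) / 2) := Real.sqrt_eq_rpow (f α)
    calc (f α ^ ((3 : ℝ) / 4))⁻¹ * ‖B (η α)‖
        ≤ (f α ^ ((3 : ℝ) / 4))⁻¹ * f α ^ ((1 : ℝ) / 2) := by
          apply mul_le_mul_of_nonneg_left hBle
          positivity
      _ = f α ^ (-(1 : ℝ) / 4) := by
          rw [← Real.rpow_neg hfα.le, ← Real.rpow_add hfα]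
          norm_num
  constructor
  · exact hbound
  · have h2 : Tendsto (fun α => f α ^ (-(1 : ℝ) / 4)) (𝓝[>] (0 : ℝ)) (𝓝 0) := by
      have h3 := (tendsto_rpow_neg_atTop (show (0 : ℝ) < 1 / 4 by norm_num)).comp htop
      simpa [Function.comp_def, neg_div] using h3
    rw [tendsto_zero_iff_norm_tendsto_zero]
    apply squeeze_zero' (Eventually.of_forall fun α => norm_nonneg _) _ h2
    filter_upwards [self_mem_nhdsWithin] with α hα
    exact hbound α hα
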